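/- Let ρ and ρ₀ be d×d complex density matrices, let p₀, p₁ ≥ 0 with p₀ + p₁ = 1, and for η ∈ [0,1] set ρ₁(η) := η·ρ + (1−η)·ρ₀. If 0 ≤ η' ≤ η ≤ 1, then ‖p₁·ρ₁(η') − p₀·ρ₀‖₁ ≤ ‖p₁·ρ₁(η) − p₀·ρ₀‖₁; equivalently, the minimum error P_err(η) = (1 − ‖p₁ρ₁(η) − p₀ρ₀‖₁)/2 is a non-increasing function of the reflectivity η. -/

import Mathlib

open Matrix BigOperators ComplexOrder

/-- The trace norm of a Hermitian matrix: the sum of the absolute values of its eigenvalues. -/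
noncomputable def traceNorm {n : Type*} [Fintype n] [DecidableEq n]
    {A : Matrix n n ℂ} (hA : A.IsHermitian) : ℝ :=
  ∑ i, |hA.eigenvalues i|

section Aux

lemma max_sub_max_neg (a : ℝ) : max a 0 - max (-a) 0 = a := by
  rcases le_total a 0 with h | h
  · rw [max_eq_right h, max_eq_left (by linarith)]; ring
  · rw [max_eq_left h, max_eq_right (by linarith)]; ring

lemma max_add_max_neg (a : ℝ) : max a 0 + max (-a) 0 = |a| := by
  rcases le_total a 0 with h | h
  · rw [max_eq_right h, max_eq_left (by linarith), abs_of_nonpos h]; ring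
  · rw [max_eq_left h, max_eq_right (by linarith), abs_of_nonneg h]; ring

variable {n : Type*} [Fintype n] [DecidableEq n]

omit [DecidableEq n] in
lemma psd_real_smul {A : Matrix n n ℂ} (hA : A.PosSemidef) {t : ℝ} (ht : 0 ≤ t) :
    (t • A).PosSemidef := by
  have hc : t • A = (t : ℂ) • A := by
    ext i j; simp [Matrix.smul_apply, Complex.real_smul]
  rw [hc]
  refine ⟨?_, fun x => ?_⟩
  · rw [Matrix.IsHermitian, conjTranspose_smul, hA.1]
    simp [Complex.conj_ofReal]
  · refine le_of_le_of_eq (mul_nonneg (Complex.zero_le_real.mpr ht) (hA.2 x)) ?_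
    rw [Finsupp.mul_sum]
    refine Finsupp.sum_congr fun i _ => ?_
    rw [Finsupp.mul_sum]
    refine Finsupp.sum_congr fun j _ => ?_
    simp only [Matrix.smul_apply, smul_eq_mul]
    ring

lemma psd_diag_nonneg {B : Matrix n n ℂ} (hB : B.PosSemidef) (i : n) : 0 ≤ B i i := by
  exact hB.diag_nonneg

lemma trace_re_eq_sum_eigenvalues {A : Matrix n n ℂ} (hA : A.IsHermitian) :
    (A.trace).re = ∑ i, hA.eigenvalues i := by
  have hdiag : star (hA.eigenvectorUnitary : Matrix n n ℂ) * A * (hA.eigenvectorUnitary : Matrix n n ℂ)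
      = diagonal (RCLike.ofReal ∘ hA.eigenvalues) := by
    have := hA.conjStarAlgAut_star_eigenvectorUnitary
    rwa [Unitary.conjStarAlgAut_star_apply] at this
  have h1 : star (hA.eigenvectorUnitary : Matrix n n ℂ) * (hA.eigenvectorUnitary : Matrix n n ℂ)
      = 1 := Matrix.mem_unitaryGroup_iff'.mp hA.eigenvectorUnitary.2
  have h2 : (hA.eigenvectorUnitary : Matrix n n ℂ) * star (hA.eigenvectorUnitary : Matrix n n ℂ)
      = 1 := Matrix.mem_unitaryGroup_iff.mp hA.eigenvectorUnitary.2
  generalize hUg : (hA.eigenvectorUnitary : Matrix n n ℂ) = U at hdiag h1 h2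
  have : A.trace = (diagonal (RCLike.ofReal ∘ hA.eigenvalues)).trace := by
    rw [← hdiag, Matrix.trace_mul_cycle, h2, Matrix.one_mul]
  rw [this, Matrix.trace_diagonal]
  rw [Complex.re_sum]
  simp [Function.comp]

lemma traceNorm_le_trace_add {A P Q : Matrix n n ℂ} (hA : A.IsHermitian)
    (hP : P.PosSemidef) (hQ : Q.PosSemidef) (h : A = P - Q) :
    traceNorm hA ≤ P.trace.re + Q.trace.re := by
  have hdiag : star (hA.eigenvectorUnitary : Matrix n n ℂ) * A * (hA.eigenvectorUnitary : Matrix n n ℂ)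
      = diagonal (RCLike.ofReal ∘ hA.eigenvalues) := by
    have := hA.conjStarAlgAut_star_eigenvectorUnitary
    rwa [Unitary.conjStarAlgAut_star_apply] at this
  have h2 : (hA.eigenvectorUnitary : Matrix n n ℂ) * star (hA.eigenvectorUnitary : Matrix n n ℂ)
      = 1 := Matrix.mem_unitaryGroup_iff.mp hA.eigenvectorUnitary.2
  generalize hUg : (hA.eigenvectorUnitary : Matrix n n ℂ) = U at hdiag h2
  have hP' : (star U * P * U).PosSemidef := by
    have := hP.conjTranspose_mul_mul_same U
    rwa [← Matrix.star_eq_conjTranspose] at this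
  have hQ' : (star U * Q * U).PosSemidef := by
    have := hQ.conjTranspose_mul_mul_same U
    rwa [← Matrix.star_eq_conjTranspose] at this
  have hsplit : star U * P * U - star U * Q * U
      = diagonal (RCLike.ofReal ∘ hA.eigenvalues) := by
    rw [← hdiag, h, Matrix.mul_sub, Matrix.sub_mul]
  have key : ∀ i, |hA.eigenvalues i|
      ≤ ((star U * P * U) i i).re + ((star U * Q * U) i i).re := by
    intro i
    have h1 : ((star U * P * U) i i).re - ((star U * Q * U) i i).re = hA.eigenvalues i := by
      have := congrArg (fun M => (M i i).re) hsplit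
      simpa [Matrix.sub_apply, Matrix.diagonal_apply_eq, Function.comp] using this
    have h2 : 0 ≤ ((star U * P * U) i i).re := (Complex.le_def.mp (psd_diag_nonneg hP' i)).1
    have h3 : 0 ≤ ((star U * Q * U) i i).re := (Complex.le_def.mp (psd_diag_nonneg hQ' i)).1
    rw [← h1]
    rcases abs_cases (((star U * P * U) i i).re - ((star U * Q * U) i i).re) with ⟨he, _⟩ | ⟨he, _⟩
      <;> linarith
  have hsum : traceNorm hA ≤ ∑ i, (((star U * P * U) i i).re + ((star U * Q * U) i i).re) :=
    Finset.sum_le_sum fun i _ => key i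
  have htr : ∀ B : Matrix n n ℂ, ∑ i, ((star U * B * U) i i).re = B.trace.re := by
    intro B
    have hcyc : (star U * B * U).trace = B.trace := by
      rw [Matrix.trace_mul_cycle, h2, Matrix.one_mul]
    calc ∑ i, ((star U * B * U) i i).re = ((star U * B * U).trace).re := by
          rw [Matrix.trace, Complex.re_sum]; rfl
      _ = B.trace.re := by rw [hcyc]
  rw [Finset.sum_add_distrib, htr P, htr Q] at hsum
  exact hsum

lemma exists_jordan {A : Matrix n n ℂ} (hA : A.IsHermitian) :
    ∃ P Q : Matrix n n ℂ, P.PosSemidef ∧ Q.PosSemidef ∧ A = P - Q ∧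
      P.trace.re + Q.trace.re = traceNorm hA := by
  have hspec := hA.spectral_theorem
  rw [Unitary.conjStarAlgAut_apply] at hspec
  have h1 : star (hA.eigenvectorUnitary : Matrix n n ℂ) * (hA.eigenvectorUnitary : Matrix n n ℂ)
      = 1 := Matrix.mem_unitaryGroup_iff'.mp hA.eigenvectorUnitary.2
  generalize hUg : (hA.eigenvectorUnitary : Matrix n n ℂ) = U at hspec h1
  refine ⟨U * diagonal (fun i => ((max (hA.eigenvalues i) 0 : ℝ) : ℂ)) * star U,
          U * diagonal (fun i => ((max (-hA.eigenvalues i) 0 : ℝ) : ℂ)) * star U,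
          ?_, ?_, ?_, ?_⟩
  · have hD : (diagonal (fun i => ((max (hA.eigenvalues i) 0 : ℝ) : ℂ))).PosSemidef :=
      Matrix.posSemidef_diagonal_iff.mpr fun i =>
        Complex.zero_le_real.mpr (le_max_right _ _)
    have := hD.mul_mul_conjTranspose_same U
    rwa [← Matrix.star_eq_conjTranspose] at this
  · have hD : (diagonal (fun i => ((max (-hA.eigenvalues i) 0 : ℝ) : ℂ))).PosSemidef :=
      Matrix.posSemidef_diagonal_iff.mpr fun i =>
        Complex.zero_le_real.mpr (le_max_right _ _)
    have := hD.mul_mul_conjTranspose_same U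
    rwa [← Matrix.star_eq_conjTranspose] at this
  · conv_lhs => rw [hspec]
    rw [← Matrix.sub_mul, ← Matrix.mul_sub, Matrix.diagonal_sub]
    have hfun : (RCLike.ofReal ∘ hA.eigenvalues : n → ℂ)
        = fun i => ((max (hA.eigenvalues i) 0 : ℝ) : ℂ) - ((max (-hA.eigenvalues i) 0 : ℝ) : ℂ) := by
      funext i
      rw [← Complex.ofReal_sub, max_sub_max_neg]
      rfl
    rw [hfun]
  · have htr : ∀ f : n → ℝ, (U * diagonal (fun i => ((f i : ℝ) : ℂ)) * star U).trace.re
        = ∑ i, f i := by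
      intro f
      rw [Matrix.trace_mul_cycle, h1, Matrix.one_mul,
        Matrix.trace_diagonal, ← Complex.ofReal_sum, Complex.ofReal_re]
    rw [htr, htr, traceNorm, ← Finset.sum_add_distrib]
    exact Finset.sum_congr rfl fun i _ => max_add_max_neg _

end Aux

/-- **Monotonicity of the minimal error in the reflectivity.** With
`ρ₁(η) := η·ρ + (1−η)·ρ₀`, if `0 ≤ η' ≤ η ≤ 1` then
`‖p₁ρ₁(η') − p₀ρ₀‖₁ ≤ ‖p₁ρ₁(η) − p₀ρ₀‖₁`; equivalently, the Helstrom error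
`P_err(η) = (1 − ‖p₁ρ₁(η) − p₀ρ₀‖₁)/2` is non-increasing in `η`. -/
theorem minimal_error_monotone {d : ℕ}
    (ρ ρ₀ : Matrix (Fin d) (Fin d) ℂ)
    (hρ : ρ.PosSemidef) (hρtr : ρ.trace = 1)
    (h₀ : ρ₀.PosSemidef) (h₀tr : ρ₀.trace = 1)
    (p₀ p₁ : ℝ) (hp₀ : 0 ≤ p₀) (hp₁ : 0 ≤ p₁) (hsum : p₀ + p₁ = 1)
    (η η' : ℝ) (hη'0 : 0 ≤ η') (hη'η : η' ≤ η) (hη1 : η ≤ 1)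
    (hM' : (p₁ • (η' • ρ + (1 - η') • ρ₀) - p₀ • ρ₀).IsHermitian)
    (hM : (p₁ • (η • ρ + (1 - η) • ρ₀) - p₀ • ρ₀).IsHermitian) :
    traceNorm hM' ≤ traceNorm hM ∧
      (1 - traceNorm hM) / 2 ≤ (1 - traceNorm hM') / 2 := by
  suffices hmain : traceNorm hM' ≤ traceNorm hM by
    exact ⟨hmain, by linarith⟩
  rcases eq_or_lt_of_le (le_trans hη'0 hη'η) with hη0 | hη0
  · -- η = 0, hence η' = 0, the two matrices coincide
    have h1 : η = 0 := hη0.symm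
    have h2 : η' = 0 := le_antisymm (h1 ▸ hη'η) hη'0
    subst h1; subst h2
    exact le_of_eq rfl
  -- η > 0
  set c : ℝ := p₁ - p₀ with hc
  set t : ℝ := η' / η with ht
  have ht0 : 0 ≤ t := div_nonneg hη'0 hη0.le
  have ht1 : t ≤ 1 := (div_le_one hη0).mpr hη'η
  have hηc : (η : ℂ) ≠ 0 := by exact_mod_cast hη0.ne'
  set M : Matrix (Fin d) (Fin d) ℂ := p₁ • (η • ρ + (1 - η) • ρ₀) - p₀ • ρ₀ with hMdef
  set M' : Matrix (Fin d) (Fin d) ℂ := p₁ • (η' • ρ + (1 - η') • ρ₀) - p₀ • ρ₀ with hM'def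
  have hmix : M' = t • M + ((1 - t) * c) • ρ₀ := by
    ext i j
    simp only [hMdef, hM'def, Matrix.sub_apply, Matrix.add_apply, Matrix.smul_apply,
      Complex.real_smul, ht, hc]
    push_cast
    field_simp
    ring
  -- trace of M
  have htrM : M.trace = ((p₁ - p₀ : ℝ) : ℂ) := by
    have : M.trace = p₁ • (η • ρ.trace + (1 - η) • ρ₀.trace) - p₀ • ρ₀.trace := by
      simp [hMdef, Matrix.trace_sub, Matrix.trace_smul, Matrix.trace_add]
    rw [this, hρtr, h₀tr]
    push_cast [Complex.real_smul]
    ring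
  have habs : |c| ≤ traceNorm hM := by
    have h1 : (M.trace).re = ∑ i, hM.eigenvalues i := trace_re_eq_sum_eigenvalues hM
    have h2 : (M.trace).re = c := by rw [htrM]; simp [hc]
    calc |c| = |∑ i, hM.eigenvalues i| := by rw [← h1, h2]
      _ ≤ ∑ i, |hM.eigenvalues i| := Finset.abs_sum_le_sum_abs _ _
      _ = traceNorm hM := rfl
  obtain ⟨P, Q, hPp, hQp, hPQ, htrPQ⟩ := exists_jordan hM
  set cp : ℝ := max c 0 with hcp
  set cm : ℝ := max (-c) 0 with hcm
  have hcpm : c = cp - cm := (max_sub_max_neg c).symm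
  have habs2 : cp + cm = |c| := max_add_max_neg c
  set P' : Matrix (Fin d) (Fin d) ℂ := t • P + ((1 - t) * cp) • ρ₀ with hP'
  set Q' : Matrix (Fin d) (Fin d) ℂ := t • Q + ((1 - t) * cm) • ρ₀ with hQ'
  have hP'p : P'.PosSemidef := (psd_real_smul hPp ht0).add
    (psd_real_smul h₀ (mul_nonneg (by linarith) (le_max_right _ _)))
  have hQ'p : Q'.PosSemidef := (psd_real_smul hQp ht0).add
    (psd_real_smul h₀ (mul_nonneg (by linarith) (le_max_right _ _)))
  have hdec : M' = P' - Q' := by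
    rw [hmix, hPQ, hP', hQ', hcpm]
    module
  have hbound := traceNorm_le_trace_add hM' hP'p hQ'p hdec
  have htrρ₀ : (ρ₀.trace).re = 1 := by rw [h₀tr]; simp
  have hsmre : ∀ (r : ℝ) (z : ℂ), (r • z).re = r * z.re := by
    intro r z; rw [Complex.real_smul]; simp
  have htrP' : P'.trace.re = t * P.trace.re + (1 - t) * cp := by
    rw [hP', Matrix.trace_add, Matrix.trace_smul, Matrix.trace_smul, Complex.add_re,
      hsmre, hsmre, htrρ₀]
    ring
  have htrQ' : Q'.trace.re = t * Q.trace.re + (1 - t) * cm := by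
    rw [hQ', Matrix.trace_add, Matrix.trace_smul, Matrix.trace_smul, Complex.add_re,
      hsmre, hsmre, htrρ₀]
    ring
  have : traceNorm hM' ≤ t * traceNorm hM + (1 - t) * |c| := by
    rw [htrP', htrQ'] at hbound
    calc traceNorm hM' ≤ t * P.trace.re + (1 - t) * cp + (t * Q.trace.re + (1 - t) * cm) :=
          hbound
      _ = t * (P.trace.re + Q.trace.re) + (1 - t) * (cp + cm) := by ring
      _ = t * traceNorm hM + (1 - t) * |c| := by rw [htrPQ, habs2]
  nlinarith [mul_le_mul_of_nonneg_left habs (by linarith : (0:ℝ) ≤ 1 - t)]
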